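/- Fix c₀ ≠ 0 and let 𝔥 : [−1, 1] → ℝ be continuous and positive, with minimum H_m > 0 and maximum H_M. Then every (x, y) ∈ Γ₁ satisfies H_m ≤ f₁(x, y) ≤ H_M; moreover Γ₁ is a bounded subset of ℝ², its closure in ℝ² is contained in Γ₁ ∪ {p₁, −p₁}, and consequently the set Γ₁ ∪ {p₁, −p₁} is compact. -/

import Mathlib

/-- The function `F₁` whose zero set in the phase space `Θ₁ = (0,∞) × (−1,1)`
is the nullcline `Γ₁`. -/
noncomputable def helicoidalF1 (c₀ : ℝ) (𝔥 : ℝ → ℝ) (p : ℝ × ℝ) : ℝ :=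
  2 * 𝔥 (p.1 * p.2 / Real.sqrt (c₀ ^ 2 * p.2 ^ 2 + p.1 ^ 2))
      * (p.1 ^ 2 + c₀ ^ 2 * p.2 ^ 2) ^ ((3 : ℝ) / 2)
    - (p.1 ^ 2 + 2 * c₀ ^ 2 * p.2 ^ 2) * Real.sqrt (1 - p.2 ^ 2)

/-- The function `f₁` whose level curves describe the nullclines of the
helicoidal CMC system (with `ε = 1`). -/
noncomputable def helicoidalf1 (c₀ : ℝ) (p : ℝ × ℝ) : ℝ :=
  (p.1 ^ 2 + 2 * c₀ ^ 2 * p.2 ^ 2) * Real.sqrt (1 - p.2 ^ 2)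
    / (2 * (p.1 ^ 2 + c₀ ^ 2 * p.2 ^ 2) ^ ((3 : ℝ) / 2))

lemma helico_rpow32 {D : ℝ} (hD : 0 ≤ D) : D ^ ((3:ℝ)/2) = D * Real.sqrt D := by
  rcases hD.eq_or_lt with h | h
  · rw [← h]
    rw [Real.zero_rpow (by norm_num), Real.sqrt_zero, mul_zero]
  · have h32 : (3:ℝ)/2 = 1 + 1/2 := by norm_num
    rw [h32, Real.rpow_add h, Real.rpow_one, Real.sqrt_eq_rpow]

lemma helico_t_mem (c₀ x y : ℝ) (hx : 0 ≤ x) (hy : |y| ≤ 1) :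
    x * y / Real.sqrt (c₀ ^ 2 * y ^ 2 + x ^ 2) ∈ Set.Icc (-1:ℝ) 1 := by
  rw [Set.mem_Icc, ← abs_le, abs_div, abs_of_nonneg (Real.sqrt_nonneg _)]
  rcases (Real.sqrt_nonneg (c₀ ^ 2 * y ^ 2 + x ^ 2)).eq_or_lt with h | h
  · rw [← h, div_zero]; norm_num
  · rw [div_le_one h]
    have h1 : |x * y| ≤ x := by
      rw [abs_mul, abs_of_nonneg hx]
      nlinarith [abs_nonneg y]
    have h2 : x ≤ Real.sqrt (c₀ ^ 2 * y ^ 2 + x ^ 2) :=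
      Real.le_sqrt_of_sq_le (by nlinarith [sq_nonneg (c₀ * y)])
    exact h1.trans h2

set_option maxHeartbeats 2000000 in
/-- If `𝔥` is continuous and positive on `[−1,1]` with minimum
`H_m > 0` and maximum `H_M`, then every point of `Γ₁` satisfies
`H_m ≤ f₁ ≤ H_M`, `Γ₁` is bounded, its closure is contained in
`Γ₁ ∪ {p₁, −p₁}`, and `Γ₁ ∪ {p₁, −p₁}` is compact. -/
theorem helicoidal_nullcline_compact (c₀ : ℝ) (hc₀ : c₀ ≠ 0) (𝔥 : ℝ → ℝ)
    (hcont : ContinuousOn 𝔥 (Set.Icc (-1) 1))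
    (Hm HM : ℝ) (hHm : 0 < Hm)
    (hmin : ∀ t ∈ Set.Icc (-1 : ℝ) 1, Hm ≤ 𝔥 t)
    (hmax : ∀ t ∈ Set.Icc (-1 : ℝ) 1, 𝔥 t ≤ HM)
    (hminatt : ∃ t ∈ Set.Icc (-1 : ℝ) 1, 𝔥 t = Hm)
    (hmaxatt : ∃ t ∈ Set.Icc (-1 : ℝ) 1, 𝔥 t = HM) :
    let Θ₁ : Set (ℝ × ℝ) := Set.Ioi 0 ×ˢ Set.Ioo (-1) 1
    let Γ₁ : Set (ℝ × ℝ) := {p | p ∈ Θ₁ ∧ helicoidalF1 c₀ 𝔥 p = 0}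
    let p₁ : ℝ × ℝ := (0, 1 / Real.sqrt (1 + c₀ ^ 2 * (𝔥 0) ^ 2))
    (∀ p ∈ Γ₁, Hm ≤ helicoidalf1 c₀ p ∧ helicoidalf1 c₀ p ≤ HM) ∧
    Bornology.IsBounded Γ₁ ∧
    closure Γ₁ ⊆ Γ₁ ∪ {p₁, -p₁} ∧
    IsCompact (Γ₁ ∪ {p₁, -p₁}) := by
  intro Θ₁ Γ₁ p₁
  have h0mem : (0:ℝ) ∈ Set.Icc (-1:ℝ) 1 := by norm_num
  have hHM0 : 0 < HM := hHm.trans_le ((hmin 0 h0mem).trans (hmax 0 h0mem))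
  have h𝔥0 : 0 < 𝔥 0 := hHm.trans_le (hmin 0 h0mem)
  -- key pointwise facts on Γ₁
  have key : ∀ p : ℝ × ℝ, p ∈ Γ₁ →
      (Hm ≤ helicoidalf1 c₀ p ∧ helicoidalf1 c₀ p ≤ HM) ∧ p.1 ≤ 1/Hm ∧
      Real.sqrt (1 - p.2 ^ 2) ≤ 2 * HM * Real.sqrt (p.1 ^ 2 + c₀ ^ 2 * p.2 ^ 2) := by
    rintro ⟨x, y⟩ ⟨⟨hx, hy⟩, hF⟩
    simp only [Set.mem_Ioi] at hx
    simp only [Set.mem_Ioo] at hy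
    have hD : 0 < x ^ 2 + c₀ ^ 2 * y ^ 2 := by nlinarith [sq_nonneg (c₀ * y), pow_pos hx 2]
    set t := x * y / Real.sqrt (c₀ ^ 2 * y ^ 2 + x ^ 2) with ht
    have htmem : t ∈ Set.Icc (-1:ℝ) 1 :=
      helico_t_mem c₀ x y hx.le (abs_le.2 ⟨hy.1.le, hy.2.le⟩)
    have hFeq : 2 * 𝔥 t * (x ^ 2 + c₀ ^ 2 * y ^ 2) ^ ((3:ℝ)/2)
        = (x ^ 2 + 2 * c₀ ^ 2 * y ^ 2) * Real.sqrt (1 - y ^ 2) := by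
      have h := hF
      unfold helicoidalF1 at h
      simp only at h
      linarith
    have hD32 : (x ^ 2 + c₀ ^ 2 * y ^ 2) ^ ((3:ℝ)/2)
        = (x ^ 2 + c₀ ^ 2 * y ^ 2) * Real.sqrt (x ^ 2 + c₀ ^ 2 * y ^ 2) :=
      helico_rpow32 hD.le
    have hD32pos : 0 < (x ^ 2 + c₀ ^ 2 * y ^ 2) ^ ((3:ℝ)/2) := Real.rpow_pos_of_pos hD _
    have hf1 : helicoidalf1 c₀ (x, y) = 𝔥 t := by
      unfold helicoidalf1
      simp only
      rw [← hFeq]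
      field_simp
    have htHm := hmin t htmem
    have htHM := hmax t htmem
    have hsqD : 0 < Real.sqrt (x ^ 2 + c₀ ^ 2 * y ^ 2) := Real.sqrt_pos.2 hD
    have hmulD : Real.sqrt (x ^ 2 + c₀ ^ 2 * y ^ 2) * Real.sqrt (x ^ 2 + c₀ ^ 2 * y ^ 2)
        = x ^ 2 + c₀ ^ 2 * y ^ 2 := Real.mul_self_sqrt hD.le
    have hs1 : Real.sqrt (1 - y ^ 2) ≤ 1 := by
      have h := Real.sqrt_le_sqrt (show 1 - y ^ 2 ≤ 1 by nlinarith)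
      rwa [Real.sqrt_one] at h
    have hsnn : 0 ≤ Real.sqrt (1 - y ^ 2) := Real.sqrt_nonneg _
    have hup : (x ^ 2 + 2 * c₀ ^ 2 * y ^ 2) * Real.sqrt (1 - y ^ 2)
        ≤ 2 * (x ^ 2 + c₀ ^ 2 * y ^ 2) := by
      nlinarith [sq_nonneg x, sq_nonneg (c₀ * y)]
    have hDsDnn : 0 ≤ (x ^ 2 + c₀ ^ 2 * y ^ 2) * Real.sqrt (x ^ 2 + c₀ ^ 2 * y ^ 2) :=
      mul_nonneg hD.le (Real.sqrt_nonneg _)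
    have e1 : 2 * Hm * ((x ^ 2 + c₀ ^ 2 * y ^ 2) * Real.sqrt (x ^ 2 + c₀ ^ 2 * y ^ 2))
        ≤ 2 * 𝔥 t * ((x ^ 2 + c₀ ^ 2 * y ^ 2) * Real.sqrt (x ^ 2 + c₀ ^ 2 * y ^ 2)) := by
      nlinarith [hDsDnn]
    have e2 : 2 * 𝔥 t * ((x ^ 2 + c₀ ^ 2 * y ^ 2) * Real.sqrt (x ^ 2 + c₀ ^ 2 * y ^ 2))
        = (x ^ 2 + 2 * c₀ ^ 2 * y ^ 2) * Real.sqrt (1 - y ^ 2) := by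
      rw [← hD32]; exact hFeq
    have h1 : 2 * Hm * ((x ^ 2 + c₀ ^ 2 * y ^ 2) * Real.sqrt (x ^ 2 + c₀ ^ 2 * y ^ 2))
        ≤ 2 * (x ^ 2 + c₀ ^ 2 * y ^ 2) := by
      linarith [e1.trans_eq e2, hup]
    have hHmsD : Hm * Real.sqrt (x ^ 2 + c₀ ^ 2 * y ^ 2) ≤ 1 := by
      have h2 : (x ^ 2 + c₀ ^ 2 * y ^ 2) * (Hm * Real.sqrt (x ^ 2 + c₀ ^ 2 * y ^ 2))
          ≤ (x ^ 2 + c₀ ^ 2 * y ^ 2) * 1 := by nlinarith [h1]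
      exact le_of_mul_le_mul_left h2 hD
    have hxle : x ≤ 1/Hm := by
      have hxs : x ≤ Real.sqrt (x ^ 2 + c₀ ^ 2 * y ^ 2) :=
        Real.le_sqrt_of_sq_le (by nlinarith [sq_nonneg (c₀ * y)])
      rw [le_div_iff₀ hHm]
      nlinarith [mul_le_mul_of_nonneg_right hxs hHm.le, hHmsD]
    have hlow : Real.sqrt (1 - y ^ 2) ≤ 2 * HM * Real.sqrt (x ^ 2 + c₀ ^ 2 * y ^ 2) := by
      have hA : (x ^ 2 + c₀ ^ 2 * y ^ 2) * Real.sqrt (1 - y ^ 2)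
          ≤ (x ^ 2 + 2 * c₀ ^ 2 * y ^ 2) * Real.sqrt (1 - y ^ 2) :=
        mul_le_mul_of_nonneg_right (by nlinarith [sq_nonneg (c₀ * y)]) hsnn
      have hB : 2 * 𝔥 t * ((x ^ 2 + c₀ ^ 2 * y ^ 2) * Real.sqrt (x ^ 2 + c₀ ^ 2 * y ^ 2))
          ≤ 2 * HM * ((x ^ 2 + c₀ ^ 2 * y ^ 2) * Real.sqrt (x ^ 2 + c₀ ^ 2 * y ^ 2)) := by
        nlinarith [hDsDnn]
      have h1 : (x ^ 2 + c₀ ^ 2 * y ^ 2) * Real.sqrt (1 - y ^ 2)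
          ≤ (x ^ 2 + c₀ ^ 2 * y ^ 2) * (2 * HM * Real.sqrt (x ^ 2 + c₀ ^ 2 * y ^ 2)) := by
        have hC := hA.trans_eq e2.symm
        nlinarith [hC, hB]
      exact le_of_mul_le_mul_left h1 hD
    refine ⟨⟨?_, ?_⟩, hxle, hlow⟩
    · rw [hf1]; exact htHm
    · rw [hf1]; exact htHM
  -- Part 2: boundedness
  have hbound : Bornology.IsBounded Γ₁ := by
    rw [isBounded_iff_forall_norm_le]
    refine ⟨max (1/Hm) 1, ?_⟩
    rintro ⟨x, y⟩ hp
    have h1 := (key _ hp).2.1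
    obtain ⟨⟨hx, hy⟩, -⟩ := hp
    simp only [Set.mem_Ioi] at hx
    simp only [Set.mem_Ioo] at hy
    rw [Prod.norm_def]
    simp only [Real.norm_eq_abs]
    apply max_le
    · exact le_trans (by rw [abs_of_pos hx]; exact h1) (le_max_left _ _)
    · exact le_trans (abs_le.2 ⟨hy.1.le, hy.2.le⟩) (le_max_right _ _)
  -- the closed set C₀
  set C₀ : Set (ℝ × ℝ) := {p | p.1 ∈ Set.Icc 0 (1/Hm) ∧ p.2 ∈ Set.Icc (-1:ℝ) 1 ∧
      Real.sqrt (1 - p.2 ^ 2) ≤ 2 * HM * Real.sqrt (p.1 ^ 2 + c₀ ^ 2 * p.2 ^ 2)} with hC₀def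
  have hC₀closed : IsClosed C₀ := by
    have h1 : IsClosed {p : ℝ × ℝ | p.1 ∈ Set.Icc 0 (1/Hm)} :=
      isClosed_Icc.preimage continuous_fst
    have h2 : IsClosed {p : ℝ × ℝ | p.2 ∈ Set.Icc (-1:ℝ) 1} :=
      isClosed_Icc.preimage continuous_snd
    have h3 : IsClosed {p : ℝ × ℝ |
        Real.sqrt (1 - p.2 ^ 2) ≤ 2 * HM * Real.sqrt (p.1 ^ 2 + c₀ ^ 2 * p.2 ^ 2)} := by
      apply isClosed_le
      · exact Real.continuous_sqrt.comp (by continuity)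
      · exact continuous_const.mul (Real.continuous_sqrt.comp (by continuity))
    exact h1.inter (h2.inter h3)
  have hC₀pos : ∀ p ∈ C₀, 0 < p.1 ^ 2 + c₀ ^ 2 * p.2 ^ 2 := by
    rintro ⟨x, y⟩ ⟨hx, hy, hineq⟩
    dsimp only at hx hy hineq ⊢
    by_contra h
    push_neg at h
    have hc2 : 0 < c₀ ^ 2 := by positivity
    have hx2 : x ^ 2 = 0 :=
      le_antisymm (by nlinarith [sq_nonneg x, sq_nonneg y]) (sq_nonneg x)
    have hy2 : y ^ 2 = 0 := by
      have : c₀ ^ 2 * y ^ 2 = 0 := by nlinarith [sq_nonneg x, sq_nonneg y]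
      have := mul_eq_zero.1 this
      rcases this with h' | h'
      · exact absurd h' (ne_of_gt hc2)
      · exact h'
    have hx0 : x = 0 := by
      have := pow_eq_zero_iff (n := 2) (by norm_num) |>.1 hx2
      exact this
    have hy0 : y = 0 := pow_eq_zero_iff (n := 2) (by norm_num) |>.1 hy2
    rw [hx0, hy0] at hineq
    norm_num at hineq
  -- continuity of F₁ on C₀
  have hFcont : ContinuousOn (helicoidalF1 c₀ 𝔥) C₀ := by
    unfold helicoidalF1
    apply ContinuousOn.sub
    · apply ContinuousOn.mul
      · apply ContinuousOn.mul continuousOn_const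
        apply hcont.comp
        · apply ContinuousOn.div (by fun_prop) (by fun_prop)
          intro p hp
          have hD := hC₀pos p hp
          have : 0 < c₀ ^ 2 * p.2 ^ 2 + p.1 ^ 2 := by linarith
          exact ne_of_gt (Real.sqrt_pos.2 this)
        · rintro ⟨x, y⟩ ⟨hx, hy, -⟩
          exact helico_t_mem c₀ x y hx.1 (abs_le.2 ⟨hy.1, hy.2⟩)
      · exact ((Real.continuous_rpow_const (by norm_num)).comp (by fun_prop)).continuousOn
    · exact ((by fun_prop : Continuous fun p : ℝ × ℝ =>
        (p.1 ^ 2 + 2 * c₀ ^ 2 * p.2 ^ 2)).mul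
        (Real.continuous_sqrt.comp (by continuity))).continuousOn
  have hCclosed : IsClosed (C₀ ∩ helicoidalF1 c₀ 𝔥 ⁻¹' {0}) :=
    hFcont.preimage_isClosed_of_isClosed hC₀closed isClosed_singleton
  have hΓC : Γ₁ ⊆ C₀ ∩ helicoidalF1 c₀ 𝔥 ⁻¹' {0} := by
    rintro ⟨x, y⟩ hp
    have hk := key _ hp
    obtain ⟨⟨hx, hy⟩, hF⟩ := hp
    simp only [Set.mem_Ioi] at hx
    simp only [Set.mem_Ioo] at hy
    refine ⟨⟨⟨hx.le, hk.2.1⟩, ⟨hy.1.le, hy.2.le⟩, hk.2.2⟩, hF⟩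
  -- C ⊆ Γ₁ ∪ {p₁, -p₁}
  have hCsub : C₀ ∩ helicoidalF1 c₀ 𝔥 ⁻¹' {0} ⊆ Γ₁ ∪ {p₁, -p₁} := by
    rintro ⟨a, b⟩ ⟨⟨ha, hb, hineq⟩, hF0⟩
    simp only [Set.mem_preimage, Set.mem_singleton_iff] at hF0
    have hD : 0 < a ^ 2 + c₀ ^ 2 * b ^ 2 := hC₀pos _ ⟨ha, hb, hineq⟩
    set t := a * b / Real.sqrt (c₀ ^ 2 * b ^ 2 + a ^ 2) with htdef
    have htmem : t ∈ Set.Icc (-1:ℝ) 1 :=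
      helico_t_mem c₀ a b ha.1 (abs_le.2 ⟨hb.1, hb.2⟩)
    have h𝔥t : Hm ≤ 𝔥 t := hmin t htmem
    have hFeq : 2 * 𝔥 t * (a ^ 2 + c₀ ^ 2 * b ^ 2) ^ ((3:ℝ)/2)
        = (a ^ 2 + 2 * c₀ ^ 2 * b ^ 2) * Real.sqrt (1 - b ^ 2) := by
      unfold helicoidalF1 at hF0
      simp only at hF0
      linarith
    have hD32pos : 0 < (a ^ 2 + c₀ ^ 2 * b ^ 2) ^ ((3:ℝ)/2) := Real.rpow_pos_of_pos hD _
    have hb2 : b ^ 2 < 1 := by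
      rcases lt_or_ge (b ^ 2) 1 with h | h
      · exact h
      · exfalso
        have hb1 : b ^ 2 = 1 := le_antisymm (by nlinarith [hb.1, hb.2]) h
        have hz : Real.sqrt (1 - b ^ 2) = 0 := by rw [hb1]; simp
        rw [hz, mul_zero] at hFeq
        nlinarith [hFeq, hD32pos]
    rcases ha.1.eq_or_lt with haz | hapos
    · -- a = 0 : boundary point, must be ±p₁
      right
      have ha0 : a = 0 := haz.symm
      subst ha0
      have hcb : 0 < c₀ ^ 2 * b ^ 2 := by
        rcases eq_or_ne b 0 with rfl | hbne
        · exfalso; norm_num at hD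
        · positivity
      have ht0 : t = 0 := by rw [htdef]; simp
      rw [ht0] at hFeq
      have e1 : (0:ℝ) ^ 2 + c₀ ^ 2 * b ^ 2 = c₀ ^ 2 * b ^ 2 := by ring
      rw [e1, helico_rpow32 hcb.le] at hFeq
      have key2 : 𝔥 0 * Real.sqrt (c₀ ^ 2 * b ^ 2) = Real.sqrt (1 - b ^ 2) := by
        apply mul_left_cancel₀ (show (2 * (c₀ ^ 2 * b ^ 2)) ≠ 0 by positivity)
        linear_combination hFeq
      have hsq : 𝔥 0 ^ 2 * (c₀ ^ 2 * b ^ 2) = 1 - b ^ 2 := by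
        have h1 : (𝔥 0 * Real.sqrt (c₀ ^ 2 * b ^ 2)) ^ 2 = Real.sqrt (1 - b ^ 2) ^ 2 := by
          rw [key2]
        rw [mul_pow, Real.sq_sqrt hcb.le, Real.sq_sqrt (by nlinarith : (0:ℝ) ≤ 1 - b ^ 2)] at h1
        linarith
      have hden : 0 < 1 + c₀ ^ 2 * (𝔥 0) ^ 2 := by positivity
      have hbsq : b ^ 2 = 1 / (1 + c₀ ^ 2 * (𝔥 0) ^ 2) := by
        field_simp
        linear_combination hsq
      have hβsq : (1 / Real.sqrt (1 + c₀ ^ 2 * (𝔥 0) ^ 2)) ^ 2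
          = 1 / (1 + c₀ ^ 2 * (𝔥 0) ^ 2) := by
        rw [div_pow, one_pow, Real.sq_sqrt hden.le]
      have hfac : (b - 1 / Real.sqrt (1 + c₀ ^ 2 * (𝔥 0) ^ 2))
          * (b + 1 / Real.sqrt (1 + c₀ ^ 2 * (𝔥 0) ^ 2)) = 0 := by
        have : b ^ 2 = (1 / Real.sqrt (1 + c₀ ^ 2 * (𝔥 0) ^ 2)) ^ 2 := by
          rw [hβsq, hbsq]
        linear_combination this
      rcases mul_eq_zero.1 hfac with h | h
      · left
        show ((0:ℝ), b) = p₁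
        have : b = 1 / Real.sqrt (1 + c₀ ^ 2 * (𝔥 0) ^ 2) := by linarith
        simp [p₁, Prod.ext_iff, this]
      · right
        show ((0:ℝ), b) = -p₁
        have : b = -(1 / Real.sqrt (1 + c₀ ^ 2 * (𝔥 0) ^ 2)) := by linarith
        simp [p₁, Prod.ext_iff, this, Prod.neg_mk]
    · -- a > 0 : interior point, in Γ₁
      left
      have hbIoo : b ∈ Set.Ioo (-1:ℝ) 1 := ⟨by nlinarith, by nlinarith⟩
      exact ⟨Set.mem_prod.2 ⟨hapos, hbIoo⟩, hF0⟩
  have hclos : closure Γ₁ ⊆ Γ₁ ∪ {p₁, -p₁} :=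
    (closure_minimal hΓC hCclosed).trans hCsub
  refine ⟨fun p hp => (key p hp).1, hbound, hclos, ?_⟩
  have hcc : IsCompact (closure Γ₁) := hbound.isCompact_closure
  have hfin : IsCompact ({p₁, -p₁} : Set (ℝ × ℝ)) :=
    ((Set.finite_singleton _).insert _).isCompact
  have heq : Γ₁ ∪ {p₁, -p₁} = closure Γ₁ ∪ {p₁, -p₁} :=
    Set.Subset.antisymm (Set.union_subset_union_left _ subset_closure)
      (Set.union_subset (hclos.trans (by exact fun x hx => hx)) Set.subset_union_right)
  rw [heq]
  exact hcc.union hfin
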